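/- Fix an integer k ≥ 1 and let η and J_i (0 ≤ i ≤ k−1) be the k×k matrices defined by η_{ab} = δ_{a+b, k+1} and (J_i)_{ab} = δ_{a−b, i}. Let C₀ be the set of k×k complex matrices C = Σ_{i=0}^{k−1} α_i J_i with α₀ = 1 whose coefficients satisfy 2α_{2n} + Σ_{i+j=2n, i≥1, j≥1} (−1)^i α_i α_j = 0 for all integers n with 2 ≤ 2n ≤ k−1. Then: (1) C₀ is an abelian group under matrix multiplication, i.e. every C ∈ C₀ is invertible, C₀ is closed under products and inverses, and any two elements of C₀ commute; (2) the map sending C = Σ α_i J_i ∈ C₀ to the tuple of its odd-indexed coefficients (α₁, α₃, α₅, …) is a bijection from C₀ onto ℂ^{⌊k/2⌋}; equivalently, for every choice of the odd-indexed coefficients there exist unique even-indexed coefficients α_{2n} (2 ≤ 2n ≤ k−1) making the relations hold. -/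

import Mathlib

open Matrix

/-- The `k×k` matrix `J_i`: with 1-based indices, `(J_i) a b = 1` if `a - b = i`
and `0` otherwise. -/
def Jmat (k i : ℕ) : Matrix (Fin k) (Fin k) ℂ :=
  Matrix.of fun a b => if (a : ℕ) = (b : ℕ) + i then 1 else 0

/-- The set `C₀(ℙ^{k-1})` of matrices `C = Σ_{i<k} αᵢ Jᵢ` with `α₀ = 1` whose coefficients
satisfy `2·α_{2n} + Σ_{i+j=2n, i,j≥1} (-1)^i αᵢ αⱼ = 0` for all `2 ≤ 2n ≤ k - 1`. -/
def Czero (k : ℕ) : Set (Matrix (Fin k) (Fin k) ℂ) :=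
  {C | ∃ α : ℕ → ℂ, α 0 = 1 ∧
    C = ∑ i ∈ Finset.range k, α i • Jmat k i ∧
    ∀ n : ℕ, 1 ≤ n → 2 * n ≤ k - 1 →
      2 * α (2 * n) + ∑ i ∈ Finset.Ico 1 (2 * n), (-1 : ℂ) ^ i * α i * α (2 * n - i) = 0}

namespace Stmt12

noncomputable def Mk (k : ℕ) (α : ℕ → ℂ) : Matrix (Fin k) (Fin k) ℂ :=
  ∑ i ∈ Finset.range k, α i • Jmat k i

noncomputable def conv (α β : ℕ → ℂ) (m : ℕ) : ℂ :=
  ∑ i ∈ Finset.range (m + 1), α i * β (m - i)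

noncomputable def talt (α : ℕ → ℂ) (i : ℕ) : ℂ := (-1 : ℂ) ^ i * α i

lemma conv_eq (α β : ℕ → ℂ) (m : ℕ) :
    conv α β m = PowerSeries.coeff m (PowerSeries.mk α * PowerSeries.mk β) := by
  rw [PowerSeries.coeff_mul, Finset.Nat.sum_antidiagonal_eq_sum_range_succ
    (fun i j => PowerSeries.coeff i (PowerSeries.mk α) * PowerSeries.coeff j (PowerSeries.mk β))]
  simp [conv]

lemma mk_talt (α : ℕ → ℂ) :
    PowerSeries.mk (talt α) = PowerSeries.rescale (-1) (PowerSeries.mk α) := by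
  ext n
  simp [talt, PowerSeries.coeff_rescale]

lemma mk_conv (α β : ℕ → ℂ) :
    PowerSeries.mk (conv α β) = PowerSeries.mk α * PowerSeries.mk β := by
  ext n
  simp [conv_eq]

lemma conv_comm (α β : ℕ → ℂ) : conv α β = conv β α := by
  funext m; rw [conv_eq, conv_eq, mul_comm]

lemma conv_zero (α β : ℕ → ℂ) : conv α β 0 = α 0 * β 0 := by simp [conv]

lemma talt_zero (α : ℕ → ℂ) : talt α 0 = α 0 := by simp [talt]

lemma talt_talt (α : ℕ → ℂ) : talt (talt α) = α := by
  funext i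
  simp only [talt, ← mul_assoc, ← mul_pow]
  norm_num

lemma neg_one_pow_sub (i m : ℕ) (hi : i ≤ m) (hm : m % 2 = 1) :
    (-1:ℂ)^(m-i) = -(-1:ℂ)^i := by
  have h1 : (-1:ℂ)^(m-i) * (-1:ℂ)^i = (-1:ℂ)^m := by rw [← pow_add]; congr 1; omega
  have h2 : (-1:ℂ)^i * (-1:ℂ)^i = 1 := by rw [← pow_add, ← two_mul, pow_mul]; norm_num
  have h3 : (-1:ℂ)^m = -1 := Odd.neg_one_pow (Nat.odd_iff.mpr hm)
  calc (-1:ℂ)^(m-i) = ((-1:ℂ)^(m-i) * (-1:ℂ)^i) * (-1:ℂ)^i := by rw [mul_assoc, h2, mul_one]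
    _ = -(-1:ℂ)^i := by rw [h1, h3]; ring

/-- the "clean" condition: `C(x)·C(−x) ≡ 1 mod x^k` coefficientwise. -/
def Good (k : ℕ) (α : ℕ → ℂ) : Prop :=
  ∀ m < k, conv (talt α) α m = if m = 0 then 1 else 0

lemma conv_talt_odd (α : ℕ → ℂ) (m : ℕ) (hm : m % 2 = 1) : conv (talt α) α m = 0 := by
  have h := Finset.sum_range_reflect (fun i => talt α i * α (m - i)) (m + 1)
  have key : ∀ i ∈ Finset.range (m + 1),
      talt α (m + 1 - 1 - i) * α (m - (m + 1 - 1 - i)) = -(talt α i * α (m - i)) := by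
    intro i hi
    rw [Finset.mem_range] at hi
    have h1 : m + 1 - 1 - i = m - i := by omega
    have h2 : m - (m - i) = i := by omega
    rw [h1, h2, talt, talt, neg_one_pow_sub i m (by omega) hm]
    ring
  rw [Finset.sum_congr rfl key, Finset.sum_neg_distrib] at h
  have h' : conv (talt α) α m = - conv (talt α) α m := by
    conv_lhs => rw [conv, ← h]
    rw [conv]
  have : (2:ℂ) * conv (talt α) α m = 0 := by linear_combination h'
  simpa using this

/-- splitting the full sum at an even index `2n`, `n ≥ 1`. -/
lemma conv_talt_even (α : ℕ → ℂ) (h0 : α 0 = 1) (n : ℕ) (hn : 1 ≤ n) :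
    conv (talt α) α (2 * n) =
      2 * α (2 * n) + ∑ i ∈ Finset.Ico 1 (2 * n), (-1 : ℂ) ^ i * α i * α (2 * n - i) := by
  have hsplit : Finset.range (2 * n + 1) = insert 0 (insert (2*n) (Finset.Ico 1 (2*n))) := by
    ext x
    simp [Finset.mem_range, Finset.mem_Ico]
    omega
  have he : (-1:ℂ)^(2*n) = 1 := by rw [pow_mul]; norm_num
  have hsum : ∑ i ∈ Finset.Ico 1 (2*n), talt α i * α (2*n - i)
      = ∑ i ∈ Finset.Ico 1 (2*n), (-1:ℂ)^i * α i * α (2*n-i) :=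
    Finset.sum_congr rfl (fun i _ => by rw [talt])
  rw [conv, hsplit, Finset.sum_insert, Finset.sum_insert, hsum]
  · simp only [talt, Nat.sub_zero, Nat.sub_self, pow_zero, one_mul, h0, mul_one, he]
    ring
  · simp [Finset.mem_Ico]
  · simp [Finset.mem_Ico]
    omega

lemma good_iff (k : ℕ) (hk : 1 ≤ k) (α : ℕ → ℂ) (h0 : α 0 = 1) :
    (∀ n : ℕ, 1 ≤ n → 2 * n ≤ k - 1 →
      2 * α (2 * n) + ∑ i ∈ Finset.Ico 1 (2 * n), (-1 : ℂ) ^ i * α i * α (2 * n - i) = 0)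
    ↔ Good k α := by
  constructor
  · intro h m hm
    rcases Nat.even_or_odd m with ⟨n, hn⟩ | hodd
    · rcases Nat.eq_zero_or_pos n with rfl | hn1
      · subst hn; simp [conv_zero, talt_zero, h0]
      · have hmn : m = 2 * n := by omega
        subst hmn
        rw [conv_talt_even α h0 n hn1, h n hn1 (by omega), if_neg (by omega)]
    · rw [conv_talt_odd α m (Nat.odd_iff.mp hodd), if_neg]
      rintro rfl
      simp [Nat.odd_iff] at hodd
  · intro h n hn hnk
    have := h (2 * n) (by omega)
    rw [conv_talt_even α h0 n hn, if_neg (by omega)] at this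
    exact this


lemma Mk_entry (k : ℕ) (α : ℕ → ℂ) (a b : Fin k) :
    Mk k α a b = if (b : ℕ) ≤ (a : ℕ) then α ((a : ℕ) - (b : ℕ)) else 0 := by
  simp only [Mk, Matrix.sum_apply, Matrix.smul_apply, Jmat, Matrix.of_apply, smul_eq_mul,
    mul_ite, mul_one, mul_zero]
  by_cases h : (b : ℕ) ≤ (a : ℕ)
  · rw [if_pos h, Finset.sum_eq_single ((a:ℕ) - (b:ℕ))]
    · rw [if_pos (by omega)]
    · intro i _ hne
      rw [if_neg (by omega)]
    · intro hmem
      exact absurd (Finset.mem_range.mpr (by omega : (a:ℕ) - (b:ℕ) < k)) hmem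
  · rw [if_neg h]
    apply Finset.sum_eq_zero
    intro i _
    rw [if_neg (by omega)]

lemma Mk_entry0 (k : ℕ) (α : ℕ → ℂ) (i : ℕ) (hi : i < k) (h0 : 0 < k) :
    Mk k α ⟨i, hi⟩ ⟨0, h0⟩ = α i := by
  rw [Mk_entry]
  simp

lemma Mk_congr (k : ℕ) (α β : ℕ → ℂ) (h : ∀ i < k, α i = β i) : Mk k α = Mk k β := by
  unfold Mk
  exact Finset.sum_congr rfl (fun i hi => by rw [h i (Finset.mem_range.mp hi)])

lemma Mk_one (k : ℕ) (hk : 1 ≤ k) (α : ℕ → ℂ) (h : ∀ m < k, α m = if m = 0 then 1 else 0) :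
    Mk k α = 1 := by
  ext a b
  rw [Mk_entry]
  by_cases hab : (b : ℕ) ≤ (a : ℕ)
  · rw [if_pos hab, h _ (by omega), Matrix.one_apply]
    by_cases he : a = b
    · rw [if_pos he, if_pos (by omega)]
    · rw [if_neg he, if_neg (fun hc => he (Fin.ext (by omega)))]
  · rw [if_neg hab, Matrix.one_apply, if_neg (fun hc => hab (by simp [hc]))]

lemma Mk_mul (k : ℕ) (α β : ℕ → ℂ) : Mk k α * Mk k β = Mk k (conv α β) := by
  ext a b
  rw [Matrix.mul_apply, Mk_entry]
  simp only [Mk_entry]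
  by_cases hab : (b : ℕ) ≤ (a : ℕ)
  · rw [if_pos hab, conv]
    rw [Fin.sum_univ_eq_sum_range
      (fun c => (if c ≤ (a:ℕ) then α ((a:ℕ) - c) else 0) * (if (b:ℕ) ≤ c then β (c - (b:ℕ)) else 0)) k]
    have h1 : ∀ c ∈ Finset.range k,
        (if c ≤ (a:ℕ) then α ((a:ℕ) - c) else 0) * (if (b:ℕ) ≤ c then β (c - (b:ℕ)) else 0)
        = if c ∈ Finset.Icc (b:ℕ) (a:ℕ) then α ((a:ℕ) - c) * β (c - (b:ℕ)) else 0 := by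
      intro c _
      by_cases hc1 : c ≤ (a:ℕ) <;> by_cases hc2 : (b:ℕ) ≤ c <;>
        simp [hc1, hc2, Finset.mem_Icc]
    rw [Finset.sum_congr rfl h1, Finset.sum_ite_mem,
      Finset.inter_eq_right.mpr (fun x hx => Finset.mem_range.mpr
        (by rw [Finset.mem_Icc] at hx; omega : x < k))]
    have h2 : Finset.Icc (b:ℕ) (a:ℕ)
        = Finset.map ⟨fun i => (b:ℕ) + i, add_right_injective _⟩
          (Finset.range ((a:ℕ) - (b:ℕ) + 1)) := by
      ext x
      simp only [Finset.mem_Icc, Finset.mem_map, Finset.mem_range, Function.Embedding.coeFn_mk]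
      constructor
      · intro hx; exact ⟨x - (b:ℕ), by omega, by omega⟩
      · rintro ⟨i, hi, rfl⟩; omega
    rw [h2, Finset.sum_map]
    simp only [Function.Embedding.coeFn_mk]
    have h3 := Finset.sum_range_reflect
      (fun i => α i * β ((a:ℕ) - (b:ℕ) - i)) ((a:ℕ) - (b:ℕ) + 1)
    rw [← h3]
    apply Finset.sum_congr rfl
    intro i hi
    rw [Finset.mem_range] at hi
    have e1 : (a:ℕ) - ((b:ℕ) + i) = (a:ℕ) - (b:ℕ) + 1 - 1 - i := by omega
    have e2 : (b:ℕ) + i - (b:ℕ) = (a:ℕ) - (b:ℕ) - ((a:ℕ) - (b:ℕ) + 1 - 1 - i) := by omega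
    rw [e1, e2]
  · rw [if_neg hab]
    apply Finset.sum_eq_zero
    intro c _
    by_cases h1 : (c : ℕ) ≤ (a : ℕ)
    · rw [if_neg (show ¬((b:ℕ) ≤ (c:ℕ)) by omega), mul_zero]
    · rw [if_neg h1, zero_mul]


lemma mem_Czero_iff (k : ℕ) (hk : 1 ≤ k) (C : Matrix (Fin k) (Fin k) ℂ) :
    C ∈ Czero k ↔ ∃ α : ℕ → ℂ, α 0 = 1 ∧ Good k α ∧ C = Mk k α := by
  constructor
  · rintro ⟨α, h0, hC, hrel⟩
    exact ⟨α, h0, (good_iff k hk α h0).mp hrel, hC⟩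
  · rintro ⟨α, h0, hg, hC⟩
    exact ⟨α, h0, hC, (good_iff k hk α h0).mpr hg⟩

lemma good_mul (k : ℕ) (α β : ℕ → ℂ) (ha : Good k α) (hb : Good k β) :
    Good k (conv α β) := by
  intro m hm
  have h1 : PowerSeries.mk (talt (conv α β)) * PowerSeries.mk (conv α β)
      = (PowerSeries.mk (talt α) * PowerSeries.mk α)
        * (PowerSeries.mk (talt β) * PowerSeries.mk β) := by
    rw [mk_talt, mk_conv, _root_.map_mul, ← mk_talt, ← mk_talt]
    ring
  rw [conv_eq, h1, PowerSeries.coeff_mul]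
  have hterm : ∀ p ∈ Finset.HasAntidiagonal.antidiagonal m,
      (PowerSeries.coeff p.1 (PowerSeries.mk (talt α) * PowerSeries.mk α))
        * (PowerSeries.coeff p.2 (PowerSeries.mk (talt β) * PowerSeries.mk β))
      = if p = ((0 : ℕ), (0 : ℕ)) then 1 else 0 := by
    intro p hp
    rw [Finset.HasAntidiagonal.mem_antidiagonal] at hp
    rw [← conv_eq, ← conv_eq, ha p.1 (by omega), hb p.2 (by omega)]
    by_cases h1 : p.1 = 0 <;> by_cases h2 : p.2 = 0 <;>
      simp [h1, h2, Prod.ext_iff]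
  rw [Finset.sum_congr rfl hterm, Finset.sum_ite_eq' (Finset.HasAntidiagonal.antidiagonal m)
    ((0 : ℕ), (0 : ℕ)) (fun _ => (1 : ℂ))]
  by_cases hm0 : m = 0 <;> simp [hm0, eq_comm]

lemma good_talt (k : ℕ) (α : ℕ → ℂ) (ha : Good k α) : Good k (talt α) := by
  intro m hm
  have : conv (talt (talt α)) (talt α) = conv (talt α) α := by
    rw [talt_talt, conv_comm]
  rw [this]
  exact ha m hm

noncomputable def alph (o : ℕ → ℂ) : ℕ → ℂ
  | 0 => 1
  | (n + 1) =>
    if (n + 1) % 2 = 1 then o (n / 2)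
    else (-1/2 : ℂ) * ∑ i ∈ (Finset.Ico 1 (n + 1)).attach,
      (-1 : ℂ) ^ (i : ℕ) * alph o i * alph o (n + 1 - i)
  termination_by n => n
  decreasing_by
    · have := i.2; rw [Finset.mem_Ico] at this; omega
    · have := i.2; rw [Finset.mem_Ico] at this; omega

lemma alph_zero (o : ℕ → ℂ) : alph o 0 = 1 := by rw [alph]

lemma alph_odd (o : ℕ → ℂ) (m : ℕ) : alph o (2 * m + 1) = o m := by
  rw [alph]
  rw [if_pos (by omega)]
  congr 1
  omega

lemma alph_even (o : ℕ → ℂ) (n : ℕ) (hn : 1 ≤ n) :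
    alph o (2 * n) = (-1/2 : ℂ) * ∑ i ∈ Finset.Ico 1 (2 * n),
      (-1 : ℂ) ^ i * alph o i * alph o (2 * n - i) := by
  have h : 2 * n = (2 * n - 1) + 1 := by omega
  rw [h, alph, if_neg (by omega), ← Finset.sum_attach (Finset.Ico 1 (2 * n - 1 + 1))
    (fun i => (-1 : ℂ) ^ i * alph o i * alph o (2 * n - 1 + 1 - i))]

lemma alph_rel (o : ℕ → ℂ) (n : ℕ) (hn : 1 ≤ n) :
    2 * alph o (2 * n) + ∑ i ∈ Finset.Ico 1 (2 * n),
      (-1 : ℂ) ^ i * alph o i * alph o (2 * n - i) = 0 := by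
  rw [alph_even o n hn]
  ring

lemma mul_talt_eq_one (k : ℕ) (hk : 1 ≤ k) (α : ℕ → ℂ) (hg : Good k α) :
    Mk k α * Mk k (talt α) = 1 := by
  rw [Mk_mul]
  apply Mk_one k hk
  intro m hm
  rw [show conv α (talt α) = conv (talt α) α from conv_comm α (talt α)]
  exact hg m hm

lemma talt_mul_eq_one (k : ℕ) (hk : 1 ≤ k) (α : ℕ → ℂ) (hg : Good k α) :
    Mk k (talt α) * Mk k α = 1 := by
  rw [Mk_mul]
  exact Mk_one k hk _ hg

end Stmt12

open Stmt12

/-- `C₀(ℙ^{k-1})` is an abelian group under matrix multiplication (its elements are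
invertible, and it is closed under products and inverses, with any two elements
commuting), and the map assigning to `C = Σ αᵢ Jᵢ ∈ C₀` the tuple of its odd-indexed
coefficients `α₁, α₃, …` (read off from the entries `C (2m+1) 0`) is a bijection onto
`ℂ^⌊k/2⌋`: every prescription of the odd coefficients is attained by exactly one
element of `C₀`. -/
theorem stmt_12 (k : ℕ) (hk : 1 ≤ k) :
    (∀ C ∈ Czero k, IsUnit C) ∧
    (∀ C ∈ Czero k, ∀ D ∈ Czero k, C * D ∈ Czero k) ∧
    (∀ C ∈ Czero k, C⁻¹ ∈ Czero k) ∧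
    (∀ C ∈ Czero k, ∀ D ∈ Czero k, C * D = D * C) ∧
    (∀ o : ℕ → ℂ, ∃! C : Matrix (Fin k) (Fin k) ℂ,
      C ∈ Czero k ∧
        ∀ (m : ℕ) (h : 2 * m + 1 < k), C ⟨2 * m + 1, h⟩ ⟨0, by omega⟩ = o m) := by
  refine ⟨?_, ?_, ?_, ?_, ?_⟩
  · intro C hC
    rw [mem_Czero_iff k hk] at hC
    obtain ⟨α, h0, hg, rfl⟩ := hC
    exact ⟨⟨Mk k α, Mk k (talt α), mul_talt_eq_one k hk α hg, talt_mul_eq_one k hk α hg⟩, rfl⟩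
  · intro C hC D hD
    rw [mem_Czero_iff k hk] at hC hD ⊢
    obtain ⟨α, ha0, hag, rfl⟩ := hC
    obtain ⟨β, hb0, hbg, rfl⟩ := hD
    refine ⟨conv α β, by rw [conv_zero, ha0, hb0, mul_one], good_mul k α β hag hbg, ?_⟩
    exact Mk_mul k α β
  · intro C hC
    rw [mem_Czero_iff k hk] at hC ⊢
    obtain ⟨α, h0, hg, rfl⟩ := hC
    refine ⟨talt α, by rw [talt_zero, h0], good_talt k α hg, ?_⟩
    exact Matrix.inv_eq_left_inv (talt_mul_eq_one k hk α hg)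
  · intro C hC D hD
    rw [mem_Czero_iff k hk] at hC hD
    obtain ⟨α, ha0, hag, rfl⟩ := hC
    obtain ⟨β, hb0, hbg, rfl⟩ := hD
    rw [Mk_mul, Mk_mul, conv_comm]
  · intro o
    refine ⟨Mk k (alph o), ⟨⟨alph o, alph_zero o, rfl, fun n hn _ => alph_rel o n hn⟩, ?_⟩, ?_⟩
    · intro m h
      rw [Mk_entry0 k (alph o) (2 * m + 1) h (by omega)]
      exact alph_odd o m
    · rintro C ⟨⟨β, hb0, rfl, hbrel⟩, hent⟩
      apply Mk_congr
      intro i hik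
      induction i using Nat.strong_induction_on with
      | _ i ih =>
        rcases Nat.even_or_odd i with ⟨n, hn⟩ | ⟨m, hm⟩
        · rcases Nat.eq_zero_or_pos n with rfl | hn1
          · have : i = 0 := by omega
            subst this
            rw [hb0, alph_zero]
          · have hi2n : i = 2 * n := by omega
            subst hi2n
            have hrel := hbrel n hn1 (by omega)
            have hsum : ∑ j ∈ Finset.Ico 1 (2 * n), (-1 : ℂ) ^ j * β j * β (2 * n - j)
                = ∑ j ∈ Finset.Ico 1 (2 * n), (-1 : ℂ) ^ j * alph o j * alph o (2 * n - j) := by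
              apply Finset.sum_congr rfl
              intro j hj
              rw [Finset.mem_Ico] at hj
              rw [ih j (by omega) (by omega), ih (2 * n - j) (by omega) (by omega)]
            rw [hsum] at hrel
            have := alph_rel o n hn1
            linear_combination (1/2 : ℂ) * hrel - (1/2 : ℂ) * this
        · have hi : i = 2 * m + 1 := by omega
          subst hi
          have h2 : β (2 * m + 1) = o m := by
            rw [← Mk_entry0 k β (2 * m + 1) hik (by omega : 0 < k)]
            exact hent m hik
          rw [h2, alph_odd]
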